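/- In the 0,1 game, the strategy profile in which both agents always continue (choose 2 at every position) is rational and divergent: Rat_∞(s) and diverg(s) hold for this profile s; hence divergence is rational in the 0,1 game. -/

import Mathlib

noncomputable section

/-- The two agents. -/
inductive Ag : Type
  | A
  | B
deriving DecidableEq

/-- The set of choices `{1, 2}`. -/
inductive Choice : Type
  | one
  | two
deriving DecidableEq

/-- The polynomial functor whose final coalgebra is the set of finite or
infinite strategy profiles: a node is either an ending position carrying a
utility assignment (no children) or an internal position carrying an agent
and a choice (two children, indexed by `Bool`). -/
def SPF (Agent : Type) : PFunctor.{0} :=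
  ⟨(Agent → ℝ) ⊕ (Agent × Choice), fun x => Sum.rec (fun _ => Empty) (fun _ => Bool) x⟩

/-- Finite or infinite strategy profiles, as the M-type (final coalgebra). -/
def StratProf (Agent : Type) : Type :=
  (SPF Agent).M

/-- The ending position `⟨u⟩`. -/
def leafP {Agent : Type} (u : Agent → ℝ) : StratProf Agent :=
  PFunctor.M.mk ⟨Sum.inl u, fun e => Empty.elim e⟩

/-- The strategy profile `⟨a, c, s₁, s₂⟩`. -/
def nodeP {Agent : Type} (a : Agent) (c : Choice) (s₁ s₂ : StratProf Agent) :
    StratProf Agent :=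
  PFunctor.M.mk ⟨Sum.inr (a, c), fun b => bif b then s₂ else s₁⟩

/-- The child selected by choice `c`. -/
def cchild {Agent : Type} (c : Choice) (s₁ s₂ : StratProf Agent) : StratProf Agent :=
  match c with
  | .one => s₁
  | .two => s₂

/-- `conv s`: following the choices of `s` reaches an ending position after
finitely many steps (inductive definition). -/
inductive Conv {Agent : Type} : StratProf Agent → Prop
  | leaf (u : Agent → ℝ) : Conv (leafP u)
  | node1 (a : Agent) (s₁ s₂ : StratProf Agent) :
      Conv s₁ → Conv (nodeP a Choice.one s₁ s₂)
  | node2 (a : Agent) (s₁ s₂ : StratProf Agent) :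
      Conv s₂ → Conv (nodeP a Choice.two s₁ s₂)

/-- The graph of the (partial) utility assignment `ŝ`:
`UtilR s u` holds iff following the choices of `s` reaches the ending
position `⟨u⟩`. -/
inductive UtilR {Agent : Type} : StratProf Agent → (Agent → ℝ) → Prop
  | leaf (u : Agent → ℝ) : UtilR (leafP u) u
  | node1 (a : Agent) (s₁ s₂ : StratProf Agent) (u : Agent → ℝ) :
      UtilR s₁ u → UtilR (nodeP a Choice.one s₁ s₂) u
  | node2 (a : Agent) (s₁ s₂ : StratProf Agent) (u : Agent → ℝ) :
      UtilR s₂ u → UtilR (nodeP a Choice.two s₁ s₂) u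

open Classical in
/-- The utility assignment `ŝ` (an arbitrary default on non-convergent
profiles). -/
def util {Agent : Type} (s : StratProf Agent) : Agent → ℝ :=
  if h : ∃ u, UtilR s u then h.choose else fun _ => 0

/-- `□P`, the coinductive `always` modality: `P` holds at every position of
the strategy profile (greatest fixed point). -/
def Always {Agent : Type} (P : StratProf Agent → Prop) (s : StratProf Agent) : Prop :=
  ∃ R : StratProf Agent → Prop, R s ∧ ∀ t, R t →
    P t ∧ ∀ a c s₁ s₂, t = nodeP a c s₁ s₂ → R s₁ ∧ R s₂

/-- `PE s`: `s` is always-convergent and the choice at the root of `s` is at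
least as good, for the agent who owns the root, as the other choice. -/
def PE {Agent : Type} (s : StratProf Agent) : Prop :=
  Always Conv s ∧
    (∀ a s₁ s₂, s = nodeP a Choice.one s₁ s₂ → util s₁ a ≥ util s₂ a) ∧
    (∀ a s₁ s₂, s = nodeP a Choice.two s₁ s₂ → util s₂ a ≥ util s₁ a)

/-- Subgame perfect equilibrium: `□PE`. -/
def SPE {Agent : Type} : StratProf Agent → Prop :=
  Always PE

/-- `s =_g s'`: the two strategy profiles have the same underlying game
(coinductive definition). -/
def SameGame {Agent : Type} (s s' : StratProf Agent) : Prop :=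
  ∃ R : StratProf Agent → StratProf Agent → Prop, R s s' ∧ ∀ t t', R t t' →
    (∃ u, t = leafP u ∧ t' = leafP u) ∨
    (∃ a c c' s₁ s₂ s₁' s₂',
      t = nodeP a c s₁ s₂ ∧ t' = nodeP a c' s₁' s₂' ∧ R s₁ s₁' ∧ R s₂ s₂')

/-- `Rat_∞`: rationality for finite or infinite strategy profiles
(coinductive definition). -/
def RatInf {Agent : Type} (s : StratProf Agent) : Prop :=
  ∃ R : StratProf Agent → Prop, R s ∧ ∀ t, R t →
    (∃ u, t = leafP u) ∨
    (∃ a c s₁ s₂ s₁' s₂', t = nodeP a c s₁ s₂ ∧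
      SameGame (nodeP a c s₁' s₂') (nodeP a c s₁ s₂) ∧
      SPE (nodeP a c s₁' s₂') ∧ R (cchild c s₁ s₂))

/-- `diverg`: following the choices never reaches an ending position
(coinductive definition). -/
def Diverg {Agent : Type} (s : StratProf Agent) : Prop :=
  ∃ R : StratProf Agent → Prop, R s ∧ ∀ t, R t →
    ∃ a c s₁ s₂, t = nodeP a c s₁ s₂ ∧ R (cchild c s₁ s₂)

/-- The agent moving at position `n` of an infinite comb game: Alice at even
positions, Bob at odd positions. -/
def agAt (n : ℕ) : Ag :=
  if n % 2 = 0 then Ag.A else Ag.B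

/-- Leaf utilities of the 0,1 game at position `n`: the agent who quits
receives `0` and the other agent receives `1`. -/
def u01 (n : ℕ) : Ag → ℝ :=
  if n % 2 = 0 then fun x =>
    match x with
    | Ag.A => (0 : ℝ)
    | Ag.B => (1 : ℝ)
  else fun x =>
    match x with
    | Ag.A => (1 : ℝ)
    | Ag.B => (0 : ℝ)

/-- One corecursion step for the strategy profile of the 0,1 game determined
by the choice function `f : ℕ → Choice` (the choice made at each position). -/
def comb01Step (f : ℕ → Choice) : (ℕ ⊕ (Ag → ℝ)) → (SPF Ag).Obj (ℕ ⊕ (Ag → ℝ))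
  | Sum.inr u => ⟨Sum.inl u, fun e => Empty.elim e⟩
  | Sum.inl n =>
      ⟨Sum.inr (agAt n, f n),
        fun b => bif b then Sum.inl (n + 1) else Sum.inr (u01 n)⟩

/-- The strategy profile of the 0,1 game, starting at position `n`, in which
the choice at each position `m` is `f m`. -/
def comb01 (f : ℕ → Choice) (n : ℕ) : StratProf Ag :=
  PFunctor.M.corec (comb01Step f) (Sum.inl n)

namespace ZO01

lemma leaf_inj {Agent : Type} {u v : Agent → ℝ} (h : leafP u = leafP v) : u = v := by
  have h2 := PFunctor.M.mk_inj h
  have h3 : (Sum.inl u : (Agent → ℝ) ⊕ (Agent × Choice)) = Sum.inl v :=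
    congrArg Sigma.fst h2
  exact Sum.inl.inj h3

lemma leaf_ne_node {Agent : Type} {u : Agent → ℝ} {a c} {s₁ s₂ : StratProf Agent} :
    leafP u ≠ nodeP a c s₁ s₂ := by
  intro h
  have h2 := PFunctor.M.mk_inj h
  have h3 : (Sum.inl u : (Agent → ℝ) ⊕ (Agent × Choice)) = Sum.inr (a, c) :=
    congrArg Sigma.fst h2
  exact Sum.inl_ne_inr h3

lemma node_inj {Agent : Type} {a a' : Agent} {c c'} {s₁ s₂ s₁' s₂' : StratProf Agent}
    (h : nodeP a c s₁ s₂ = nodeP a' c' s₁' s₂') :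
    a = a' ∧ c = c' ∧ s₁ = s₁' ∧ s₂ = s₂' := by
  have h2 := PFunctor.M.mk_inj h
  obtain ⟨h3, h4⟩ := Sigma.mk.inj_iff.mp h2
  obtain ⟨ha, hc⟩ : a = a' ∧ c = c' := by
    have := Sum.inr.inj h3
    exact ⟨congrArg Prod.fst this, congrArg Prod.snd this⟩
  subst ha; subst hc
  have h5 := eq_of_heq h4
  exact ⟨rfl, rfl, congrFun h5 false, congrFun h5 true⟩

lemma utilR_leaf_inv {Agent : Type} {u v : Agent → ℝ} (h : UtilR (leafP u) v) : v = u := by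
  generalize hE : leafP u = t at h
  cases h with
  | leaf w => exact (leaf_inj hE).symm
  | node1 a s₁ s₂ x _ => exact absurd hE leaf_ne_node
  | node2 a s₁ s₂ x _ => exact absurd hE leaf_ne_node

lemma utilR_node1_inv {Agent : Type} {a : Agent} {s₁ s₂ v}
    (h : UtilR (nodeP a Choice.one s₁ s₂) v) : UtilR s₁ v := by
  generalize hE : nodeP a Choice.one s₁ s₂ = t at h
  cases h with
  | leaf w => exact absurd hE.symm leaf_ne_node
  | node1 a' t₁ t₂ x hx =>
    obtain ⟨_, _, h1, _⟩ := node_inj hE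
    exact h1 ▸ hx
  | node2 a' t₁ t₂ x hx =>
    obtain ⟨_, hc, _, _⟩ := node_inj hE
    exact absurd hc (by simp)

lemma utilR_node2_inv {Agent : Type} {a : Agent} {s₁ s₂ v}
    (h : UtilR (nodeP a Choice.two s₁ s₂) v) : UtilR s₂ v := by
  generalize hE : nodeP a Choice.two s₁ s₂ = t at h
  cases h with
  | leaf w => exact absurd hE.symm leaf_ne_node
  | node2 a' t₁ t₂ x hx =>
    obtain ⟨_, _, _, h2⟩ := node_inj hE
    exact h2 ▸ hx
  | node1 a' t₁ t₂ x hx =>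
    obtain ⟨_, hc, _, _⟩ := node_inj hE
    exact absurd hc (by simp)

lemma utilR_unique {Agent : Type} {s : StratProf Agent} {u v : Agent → ℝ}
    (h : UtilR s u) (h' : UtilR s v) : u = v := by
  induction h generalizing v with
  | leaf w => exact (utilR_leaf_inv h').symm
  | node1 a s₁ s₂ w _ ih => exact ih (utilR_node1_inv h')
  | node2 a s₁ s₂ w _ ih => exact ih (utilR_node2_inv h')

lemma utilR_util {Agent : Type} {s : StratProf Agent} {u : Agent → ℝ}
    (h : UtilR s u) : util s = u := by
  have hex : ∃ u, UtilR s u := ⟨u, h⟩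
  rw [util, dif_pos hex]
  exact utilR_unique hex.choose_spec h

lemma util_leaf {Agent : Type} (u : Agent → ℝ) : util (leafP u) = u :=
  utilR_util (UtilR.leaf u)

lemma corec_inr (f : ℕ → Choice) (u : Ag → ℝ) :
    PFunctor.M.corec (comb01Step f) (Sum.inr u) = leafP u := by
  rw [PFunctor.M.corec_def, leafP]
  congr 1
  simp only [comb01Step, PFunctor.map]
  congr 1
  funext e
  exact Empty.elim e

lemma comb01_eq (f : ℕ → Choice) (n : ℕ) :
    comb01 f n = nodeP (agAt n) (f n) (leafP (u01 n)) (comb01 f (n + 1)) := by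
  rw [comb01, PFunctor.M.corec_def, nodeP]
  congr 1
  simp only [comb01Step, PFunctor.map]
  congr 1
  funext b
  cases b
  · exact corec_inr f (u01 n)
  · rfl

/-- Alternate-quit profile: continue at positions of parity `p`, quit elsewhere. -/
def altf (p m : ℕ) : Choice := if m % 2 = p % 2 then Choice.two else Choice.one

lemma altf_two {p m : ℕ} (h : m % 2 = p % 2) : altf p m = Choice.two := if_pos h
lemma altf_one {p m : ℕ} (h : ¬ m % 2 = p % 2) : altf p m = Choice.one := if_neg h

lemma u01_next (m : ℕ) : u01 (m + 1) (agAt m) = 1 := by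
  rcases Nat.mod_two_eq_zero_or_one m with h | h
  · have h1 : (m + 1) % 2 = 1 := by omega
    simp [u01, agAt, h, h1]
  · have h1 : (m + 1) % 2 = 0 := by omega
    simp [u01, agAt, h, h1]

lemma u01_same (m m' : ℕ) (h : m' % 2 = m % 2) : u01 m' (agAt m) = 0 := by
  rcases Nat.mod_two_eq_zero_or_one m with hm | hm
  · have h1 : m' % 2 = 0 := by omega
    simp [u01, agAt, hm, h1]
  · have h1 : m' % 2 ≠ 0 := by omega
    simp [u01, agAt, hm, h1]

lemma utilR_quit {f : ℕ → Choice} {m : ℕ} (h : f m = Choice.one) :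
    UtilR (comb01 f m) (u01 m) := by
  rw [comb01_eq, h]
  exact UtilR.node1 _ _ _ _ (UtilR.leaf _)

lemma utilR_cont_quit {f : ℕ → Choice} {m : ℕ} (h : f m = Choice.two)
    (h' : f (m + 1) = Choice.one) : UtilR (comb01 f m) (u01 (m + 1)) := by
  rw [comb01_eq, h]
  exact UtilR.node2 _ _ _ _ (utilR_quit h')

lemma conv_alt (p k : ℕ) : Conv (comb01 (altf p) k) := by
  by_cases h : k % 2 = p % 2
  · rw [comb01_eq, altf_two h]
    apply Conv.node2
    have h1 : ¬ (k + 1) % 2 = p % 2 := by omega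
    rw [comb01_eq, altf_one h1]
    exact Conv.node1 _ _ _ (Conv.leaf _)
  · rw [comb01_eq, altf_one h]
    exact Conv.node1 _ _ _ (Conv.leaf _)

lemma alwaysConv_leaf {Agent : Type} (u : Agent → ℝ) : Always Conv (leafP u) := by
  refine ⟨fun t => t = leafP u, rfl, ?_⟩
  rintro t rfl
  exact ⟨Conv.leaf u, fun a c s₁ s₂ h => absurd h leaf_ne_node⟩

lemma alwaysConv_alt (p k : ℕ) : Always Conv (comb01 (altf p) k) := by
  refine ⟨fun t => (∃ m, t = comb01 (altf p) m) ∨ (∃ u, t = leafP u),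
    Or.inl ⟨k, rfl⟩, ?_⟩
  rintro t (⟨m, rfl⟩ | ⟨u, rfl⟩)
  · refine ⟨conv_alt p m, ?_⟩
    intro a c s₁ s₂ h
    rw [comb01_eq] at h
    obtain ⟨_, _, h1, h2⟩ := node_inj h
    exact ⟨Or.inr ⟨u01 m, h1.symm⟩, Or.inl ⟨m + 1, h2.symm⟩⟩
  · exact ⟨Conv.leaf u, fun a c s₁ s₂ h => absurd h leaf_ne_node⟩

lemma pe_leaf {Agent : Type} (u : Agent → ℝ) : PE (leafP u) :=
  ⟨alwaysConv_leaf u, fun a s₁ s₂ h => absurd h leaf_ne_node,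
    fun a s₁ s₂ h => absurd h leaf_ne_node⟩

lemma pe_alt (p m : ℕ) : PE (comb01 (altf p) m) := by
  refine ⟨alwaysConv_alt p m, ?_, ?_⟩
  · intro a s₁ s₂ h
    rw [comb01_eq] at h
    obtain ⟨ha, hc, h1, h2⟩ := node_inj h
    have hm : ¬ m % 2 = p % 2 := by
      intro hh; rw [altf_two hh] at hc; cases hc
    have hm1 : (m + 1) % 2 = p % 2 := by omega
    have hm2 : ¬ (m + 2) % 2 = p % 2 := by omega
    have hu2 : util s₂ = u01 (m + 2) :=
      h2 ▸ utilR_util (utilR_cont_quit (altf_two hm1) (altf_one hm2))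
    have hu1 : util s₁ = u01 m := h1 ▸ util_leaf _
    rw [hu1, hu2, ← ha, u01_same m m rfl, u01_same m (m + 2) (by omega)]
  · intro a s₁ s₂ h
    rw [comb01_eq] at h
    obtain ⟨ha, hc, h1, h2⟩ := node_inj h
    have hm : m % 2 = p % 2 := by
      by_contra hh; rw [altf_one hh] at hc; cases hc
    have hm1 : ¬ (m + 1) % 2 = p % 2 := by omega
    have hu2 : util s₂ = u01 (m + 1) :=
      h2 ▸ utilR_util (utilR_quit (altf_one hm1))
    have hu1 : util s₁ = u01 m := h1 ▸ util_leaf _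
    rw [hu1, hu2, ← ha, u01_same m m rfl, u01_next m]
    norm_num

lemma spe_alt (p k : ℕ) : SPE (comb01 (altf p) k) := by
  refine ⟨fun t => (∃ m, t = comb01 (altf p) m) ∨ (∃ u, t = leafP u),
    Or.inl ⟨k, rfl⟩, ?_⟩
  rintro t (⟨m, rfl⟩ | ⟨u, rfl⟩)
  · refine ⟨pe_alt p m, ?_⟩
    intro a c s₁ s₂ h
    rw [comb01_eq] at h
    obtain ⟨_, _, h1, h2⟩ := node_inj h
    exact ⟨Or.inr ⟨u01 m, h1.symm⟩, Or.inl ⟨m + 1, h2.symm⟩⟩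
  · exact ⟨pe_leaf u, fun a c s₁ s₂ h => absurd h leaf_ne_node⟩

lemma sameGame_comb01 (f g : ℕ → Choice) (n : ℕ) :
    SameGame (comb01 f n) (comb01 g n) := by
  refine ⟨fun t t' => (∃ k, t = comb01 f k ∧ t' = comb01 g k) ∨
    (∃ u, t = leafP u ∧ t' = leafP u), Or.inl ⟨n, rfl, rfl⟩, ?_⟩
  rintro t t' (⟨k, rfl, rfl⟩ | ⟨u, rfl, rfl⟩)
  · right
    exact ⟨agAt k, f k, g k, _, _, _, _, comb01_eq f k, comb01_eq g k,
      Or.inr ⟨u01 k, rfl, rfl⟩, Or.inl ⟨k + 1, rfl, rfl⟩⟩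
  · left; exact ⟨u, rfl, rfl⟩

end ZO01

open ZO01 in
/-- In the 0,1 game, the strategy profile in which both agents always
continue (choose 2 at every position) is rational and divergent; hence
divergence is rational in the 0,1 game. -/
theorem zeroOne_alwaysContinue_rat_and_diverg :
    RatInf (comb01 (fun _ => Choice.two) 0) ∧ Diverg (comb01 (fun _ => Choice.two) 0) := by
  constructor
  · refine ⟨fun t => ∃ k, t = comb01 (fun _ => Choice.two) k, ⟨0, rfl⟩, ?_⟩
    rintro t ⟨k, rfl⟩
    right
    have halt : comb01 (altf k) k
        = nodeP (agAt k) Choice.two (leafP (u01 k)) (comb01 (altf k) (k + 1)) := by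
      rw [comb01_eq (altf k) k, altf_two rfl]
    have h2 : comb01 (fun _ => Choice.two) k
        = nodeP (agAt k) Choice.two (leafP (u01 k)) (comb01 (fun _ => Choice.two) (k + 1)) :=
      comb01_eq _ k
    refine ⟨agAt k, Choice.two, leafP (u01 k), comb01 (fun _ => Choice.two) (k + 1),
      leafP (u01 k), comb01 (altf k) (k + 1), h2, ?_, ?_, ⟨k + 1, rfl⟩⟩
    · rw [← halt, ← h2]
      exact sameGame_comb01 _ _ k
    · rw [← halt]
      exact spe_alt k k
  · refine ⟨fun t => ∃ k, t = comb01 (fun _ => Choice.two) k, ⟨0, rfl⟩, ?_⟩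
    rintro t ⟨k, rfl⟩
    exact ⟨agAt k, Choice.two, leafP (u01 k), comb01 (fun _ => Choice.two) (k + 1),
      comb01_eq _ k, ⟨k + 1, rfl⟩⟩
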